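/- Let K be a field of characteristic 0. Order the monomials of K[X,Y] = K[x_1,…,x_n,y_1,…,y_n] by: x_1^{a_1}y_1^{b_1}⋯x_n^{a_n}y_n^{b_n} > x_1^{a'_1}y_1^{b'_1}⋯x_n^{a'_n}y_n^{b'_n} iff (a_1,b_1,…,a_n,b_n) > (a'_1,b'_1,…,a'_n,b'_n) lexicographically. Then for any product w = x_{i_1}⋯x_{i_c}·u_{j_1k_1}⋯u_{j_dk_d} (where u_{jk} = x_jy_k − x_ky_j, j < k) satisfying the normality conditions — no two factors u_{j_pk_p}, u_{j_qk_q} intersect each other and no factor covers an x_{i_t} — the leading monomial of w with respect to this order is x_{i_1}⋯x_{i_c}·x_{j_1}y_{k_1}⋯x_{j_d}y_{k_d}, and distinct such normal products have distinct leading monomials. -/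

import Mathlib

open MvPolynomial

/-- The position of a variable in the ordering `x_1, y_1, x_2, y_2, …, x_n, y_n`:
`x_i = X (Sum.inl i)` sits at position `2i`, `y_i = X (Sum.inr i)` at position `2i + 1`. -/
def varRank {n : ℕ} : Fin n ⊕ Fin n → ℕ :=
  Sum.elim (fun i => 2 * (i : ℕ)) (fun i => 2 * (i : ℕ) + 1)

/-- `lexGT e e'` means that the exponent vector `(a_1, b_1, …, a_n, b_n)` of `e` is
strictly larger than that of `e'` in the lexicographic order: at the first position where
they differ, `e` has the larger exponent. -/
def lexGT {n : ℕ} (e e' : (Fin n ⊕ Fin n) →₀ ℕ) : Prop :=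
  ∃ s : Fin n ⊕ Fin n, (∀ t, varRank t < varRank s → e t = e' t) ∧ e' s < e s

/-- The product `x_{i_1} ⋯ x_{i_c} u_{j_1 k_1} ⋯ u_{j_d k_d}` determined by the data
`idx : Fin c → Fin n` and `jk : Fin d → Fin n × Fin n`, where `u_{jk} = x_j y_k - x_k y_j`. -/
noncomputable def prodOf (K : Type*) [CommRing K] {n c d : ℕ}
    (idx : Fin c → Fin n) (jk : Fin d → Fin n × Fin n) :
    MvPolynomial (Fin n ⊕ Fin n) K :=
  (∏ t, X (Sum.inl (idx t))) *
    ∏ p, (X (Sum.inl (jk p).1) * X (Sum.inr (jk p).2) -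
      X (Sum.inl (jk p).2) * X (Sum.inr (jk p).1))

/-- The exponent vector of the monomial `x_{i_1} ⋯ x_{i_c} · x_{j_1} y_{k_1} ⋯ x_{j_d} y_{k_d}`. -/
noncomputable def leadOf {n c d : ℕ} (idx : Fin c → Fin n) (jk : Fin d → Fin n × Fin n) :
    (Fin n ⊕ Fin n) →₀ ℕ :=
  (∑ t, Finsupp.single (Sum.inl (idx t)) 1) +
    ∑ p, (Finsupp.single (Sum.inl (jk p).1) 1 + Finsupp.single (Sum.inr (jk p).2) 1)



/-! ### Auxiliary definitions -/

noncomputable def topv {n : ℕ} (pr : Fin n × Fin n) : (Fin n ⊕ Fin n) →₀ ℕ :=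
  Finsupp.single (Sum.inl pr.1) 1 + Finsupp.single (Sum.inr pr.2) 1

noncomputable def swv {n : ℕ} (pr : Fin n × Fin n) : (Fin n ⊕ Fin n) →₀ ℕ :=
  Finsupp.single (Sum.inl pr.2) 1 + Finsupp.single (Sum.inr pr.1) 1

noncomputable def basev {n c : ℕ} (idx : Fin c → Fin n) : (Fin n ⊕ Fin n) →₀ ℕ :=
  ∑ t, Finsupp.single (Sum.inl (idx t)) 1

noncomputable def Vt {n c d : ℕ} (idx : Fin c → Fin n) (jk : Fin d → Fin n × Fin n)
    (T : Finset (Fin d)) : (Fin n ⊕ Fin n) →₀ ℕ :=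
  basev idx + ((∑ p ∈ T, topv (jk p)) + ∑ p ∈ Finset.univ \ T, swv (jk p))

noncomputable def mlead {n : ℕ} (P : Multiset (Fin n)) (U : Multiset (Fin n × Fin n)) :
    (Fin n ⊕ Fin n) →₀ ℕ :=
  (P.map (fun i => Finsupp.single (Sum.inl i) 1)).sum + (U.map topv).sum

lemma varRank_inj {n : ℕ} : Function.Injective (varRank (n := n)) := by
  rintro (a | a) (b | b) h <;> simp [varRank] at h <;>
    first
    | exact congrArg Sum.inl (Fin.ext (by omega))
    | exact congrArg Sum.inr (Fin.ext (by omega))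
    | omega

lemma lexGT_ne {n : ℕ} {e e' : (Fin n ⊕ Fin n) →₀ ℕ} (h : lexGT e e') : e' ≠ e := by
  rintro rfl
  obtain ⟨s, _, hs⟩ := h
  exact lt_irrefl _ hs

lemma lexGT_add_left {n : ℕ} (c : (Fin n ⊕ Fin n) →₀ ℕ) {a b : (Fin n ⊕ Fin n) →₀ ℕ}
    (h : lexGT a b) : lexGT (c + a) (c + b) := by
  obtain ⟨s, h1, h2⟩ := h
  exact ⟨s, fun t ht => by simp [h1 t ht], by simpa using h2⟩

lemma lexGT_add_right {n : ℕ} (c : (Fin n ⊕ Fin n) →₀ ℕ) {a b : (Fin n ⊕ Fin n) →₀ ℕ}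
    (h : lexGT a b) : lexGT (a + c) (b + c) := by
  rw [add_comm a c, add_comm b c]; exact lexGT_add_left c h

lemma lexGT_trans {n : ℕ} {a b c : (Fin n ⊕ Fin n) →₀ ℕ}
    (h1 : lexGT a b) (h2 : lexGT b c) : lexGT a c := by
  obtain ⟨s1, hs1, hlt1⟩ := h1
  obtain ⟨s2, hs2, hlt2⟩ := h2
  rcases lt_trichotomy (varRank s1) (varRank s2) with h | h | h
  · exact ⟨s1, fun t ht => (hs1 t ht).trans (hs2 t (ht.trans h)),
      (hs2 s1 h ▸ hlt1 : c s1 < a s1)⟩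
  · obtain rfl : s1 = s2 := varRank_inj h
    exact ⟨s1, fun t ht => (hs1 t ht).trans (hs2 t ht), hlt2.trans hlt1⟩
  · exact ⟨s2, fun t ht => (hs1 t (ht.trans h)).trans (hs2 t ht),
      (hs1 s2 h ▸ hlt2 : c s2 < a s2)⟩

lemma sum_lexGT {n : ℕ} {ι : Type*} [DecidableEq ι] {f g : ι → (Fin n ⊕ Fin n) →₀ ℕ}
    (s : Finset ι) (hall : ∀ p ∈ s, f p = g p ∨ lexGT (f p) (g p))
    (hex : ∃ p ∈ s, f p ≠ g p) :
    lexGT (∑ p ∈ s, f p) (∑ p ∈ s, g p) := by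
  induction s using Finset.induction_on with
  | empty => obtain ⟨p, hp, _⟩ := hex; exact absurd hp (by simp)
  | insert _ _ ha ih =>
    rename_i a s'
    rw [Finset.sum_insert ha, Finset.sum_insert ha]
    rcases hall a (Finset.mem_insert_self a s') with hfa | hfa
    · have hex' : ∃ p ∈ s', f p ≠ g p := by
        obtain ⟨p, hp, hne⟩ := hex
        rcases Finset.mem_insert.mp hp with rfl | hp'
        · exact absurd hfa hne
        · exact ⟨p, hp', hne⟩
      rw [hfa]
      exact lexGT_add_left _ (ih (fun p hp => hall p (Finset.mem_insert_of_mem hp)) hex')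
    · by_cases hrest : ∀ p ∈ s', f p = g p
      · rw [Finset.sum_congr rfl hrest]
        exact lexGT_add_right _ hfa
      · push_neg at hrest
        have := ih (fun p hp => hall p (Finset.mem_insert_of_mem hp)) hrest
        exact lexGT_trans (lexGT_add_left (f a) this) (lexGT_add_right _ hfa)

lemma pair_lexGT {pr : Fin n × Fin n} (h : pr.1 < pr.2) : lexGT (topv pr) (swv pr) := by
  obtain ⟨j, k⟩ := pr
  simp only at h
  refine ⟨Sum.inl j, fun t ht => ?_, ?_⟩
  · have hj := h
    rcases t with i | i <;>
    · simp only [varRank, Sum.elim_inl, Sum.elim_inr] at ht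
      have hij : i < j := by omega
      simp only [topv, swv, Finsupp.add_apply, Finsupp.single_apply]
      rw [if_neg, if_neg, if_neg, if_neg] <;> simp <;> omega
  · simp only [topv, swv, Finsupp.add_apply, Finsupp.single_apply]
    have hkj : k ≠ j := ne_of_gt h
    split_ifs <;> simp_all <;> omega

lemma topv_ne_swv {pr : Fin n × Fin n} (h : pr.1 < pr.2) : topv pr ≠ swv pr := by
  intro he
  have := congrFun (congrArg (DFunLike.coe) he) (Sum.inr pr.2)
  simp only [topv, swv, Finsupp.add_apply, Finsupp.single_apply] at this
  have : pr.1 ≠ pr.2 := ne_of_lt h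
  split_ifs at * <;> simp_all

lemma prod_monomial_one {σ K ι : Type*} [CommSemiring K] [DecidableEq ι]
    (s : Finset ι) (f : ι → (σ →₀ ℕ)) :
    ∏ i ∈ s, (monomial (f i) (1 : K)) = monomial (∑ i ∈ s, f i) 1 := by
  induction s using Finset.induction_on with
  | empty => simp [monomial_zero']
  | insert _ _ ha ih =>
    rename_i a s'
    rw [Finset.prod_insert ha, Finset.sum_insert ha, ih, monomial_mul, one_mul]

lemma prodOf_expand (K : Type*) [CommRing K] {n c d : ℕ}
    (idx : Fin c → Fin n) (jk : Fin d → Fin n × Fin n) :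
    prodOf K idx jk = ∑ T ∈ (Finset.univ : Finset (Fin d)).powerset,
      monomial (Vt idx jk T) (((-1) ^ ((Finset.univ \ T).card) : K)) := by
  have hX : ∀ v : Fin n ⊕ Fin n, (X v : MvPolynomial (Fin n ⊕ Fin n) K)
      = monomial (Finsupp.single v 1) 1 := fun _ => rfl
  have hA : ∀ p, X (Sum.inl (jk p).1) * X (Sum.inr (jk p).2)
      = monomial (topv (jk p)) (1 : K) := by
    intro p; rw [hX, hX, monomial_mul, one_mul]; rfl
  have hB : ∀ p, X (Sum.inl (jk p).2) * X (Sum.inr (jk p).1)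
      = monomial (swv (jk p)) (1 : K) := by
    intro p; rw [hX, hX, monomial_mul, one_mul]; rfl
  unfold prodOf
  have hbase : (∏ t, (X (Sum.inl (idx t)) : MvPolynomial (Fin n ⊕ Fin n) K))
      = monomial (basev idx) 1 := by
    simp_rw [hX]; rw [prod_monomial_one]; rfl
  simp_rw [hA, hB, sub_eq_add_neg, hbase]
  rw [Finset.prod_add, Finset.mul_sum]
  refine Finset.sum_congr rfl fun T hT => ?_
  rw [prod_monomial_one]
  have : ∏ p ∈ Finset.univ \ T, (-(monomial (swv (jk p)) (1 : K)))
      = (-1 : MvPolynomial (Fin n ⊕ Fin n) K) ^ ((Finset.univ \ T).card)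
        * monomial (∑ p ∈ Finset.univ \ T, swv (jk p)) 1 := by
    rw [← prod_monomial_one, ← Finset.prod_const, ← Finset.prod_mul_distrib]
    simp
  rw [this]
  have hneg : (-1 : MvPolynomial (Fin n ⊕ Fin n) K) ^ ((Finset.univ \ T).card)
      = C ((-1 : K) ^ ((Finset.univ \ T).card)) := by
    rw [map_pow, map_neg, map_one]
  rw [hneg, C_mul_monomial, monomial_mul, monomial_mul, Vt]
  simp only [one_mul, mul_one]

lemma Vt_univ_eq_leadOf {n c d : ℕ} (idx : Fin c → Fin n) (jk : Fin d → Fin n × Fin n) :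
    Vt idx jk Finset.univ = leadOf idx jk := by
  simp [Vt, leadOf, basev, topv]

lemma Vt_lexGT {n c d : ℕ} (idx : Fin c → Fin n) (jk : Fin d → Fin n × Fin n)
    (hlt : ∀ p, (jk p).1 < (jk p).2) {T : Finset (Fin d)} (hT : T ≠ Finset.univ) :
    lexGT (Vt idx jk Finset.univ) (Vt idx jk T) := by
  have hsplit : ∀ S : Finset (Fin d), (∑ p ∈ S, topv (jk p)) + ∑ p ∈ Finset.univ \ S, swv (jk p)
      = ∑ p : Fin d, (if p ∈ S then topv (jk p) else swv (jk p)) := by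
    intro S
    rw [Finset.sum_ite]
    congr 1
    · apply Finset.sum_congr _ (fun _ _ => rfl)
      ext p; simp
    · apply Finset.sum_congr _ (fun _ _ => rfl)
      ext p; simp
  unfold Vt
  rw [hsplit, hsplit]
  apply lexGT_add_left
  obtain ⟨p0, -, hp0⟩ := Finset.exists_of_ssubset (lt_of_le_of_ne (Finset.subset_univ T) hT)
  apply sum_lexGT
  · intro p _
    by_cases hp : p ∈ T
    · left; simp [hp]
    · right; simp only [Finset.mem_univ, if_true, hp, if_false]
      exact pair_lexGT (hlt p)
  · exact ⟨p0, Finset.mem_univ _, by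
      simp only [Finset.mem_univ, if_true, hp0, if_false]
      exact topv_ne_swv (hlt p0)⟩

lemma coeff_leadOf (K : Type*) [CommRing K] {n c d : ℕ}
    (idx : Fin c → Fin n) (jk : Fin d → Fin n × Fin n)
    (hlt : ∀ p, (jk p).1 < (jk p).2) :
    coeff (leadOf idx jk) (prodOf K idx jk) = 1 := by
  rw [prodOf_expand, coeff_sum]
  rw [Finset.sum_eq_single_of_mem Finset.univ (Finset.mem_powerset_self _)]
  · rw [coeff_monomial, if_pos (Vt_univ_eq_leadOf idx jk), Finset.sdiff_self,
      Finset.card_empty, pow_zero]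
  · intro T _ hTne
    rw [coeff_monomial, if_neg]
    exact fun h => lexGT_ne (Vt_lexGT idx jk hlt hTne) (h.trans (Vt_univ_eq_leadOf idx jk).symm)

lemma support_lexGT (K : Type*) [CommRing K] {n c d : ℕ}
    (idx : Fin c → Fin n) (jk : Fin d → Fin n × Fin n)
    (hlt : ∀ p, (jk p).1 < (jk p).2) :
    ∀ e ∈ (prodOf K idx jk).support, e ≠ leadOf idx jk → lexGT (leadOf idx jk) e := by
  intro e he hne
  rw [MvPolynomial.mem_support_iff] at he
  have hex : ∃ T : Finset (Fin d), Vt idx jk T = e := by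
    by_contra hc
    push_neg at hc
    apply he
    rw [prodOf_expand, coeff_sum]
    exact Finset.sum_eq_zero fun T _ => by rw [coeff_monomial, if_neg (hc T)]
  obtain ⟨T, rfl⟩ := hex
  have hTne : T ≠ Finset.univ := fun h => hne (h ▸ Vt_univ_eq_leadOf idx jk)
  exact (Vt_univ_eq_leadOf idx jk) ▸ Vt_lexGT idx jk hlt hTne

lemma multiset_sum_apply {α σ : Type*} (m : Multiset α) (f : α → (σ →₀ ℕ)) (x : σ) :
    ((m.map f).sum) x = (m.map (fun a => f a x)).sum := by
  induction m using Multiset.induction_on with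
  | empty => simp
  | cons a m ih => simp [ih]

lemma count_eq_sum' {α : Type*} [DecidableEq α] (m : Multiset α) (x : α) :
    (m.map (fun a => if a = x then 1 else 0)).sum = m.count x := by
  induction m using Multiset.induction_on with
  | empty => simp
  | cons a m ih =>
    rw [Multiset.map_cons, Multiset.sum_cons, ih, Multiset.count_cons]
    by_cases h : a = x
    · subst h; simp [add_comm]
    · rw [if_neg h, if_neg (Ne.symm h)]; omega

lemma mlead_inl {n : ℕ} (P : Multiset (Fin n)) (U : Multiset (Fin n × Fin n)) (i : Fin n) :
    mlead P U (Sum.inl i) = P.count i + (U.map Prod.fst).count i := by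
  rw [mlead, Finsupp.add_apply, multiset_sum_apply, multiset_sum_apply]
  congr 1
  · rw [← count_eq_sum']
    congr 1; apply Multiset.map_congr rfl
    intro a _
    rw [Finsupp.single_apply]
    by_cases h : a = i <;> simp [h]
  · rw [← count_eq_sum', Multiset.map_map]
    apply congrArg; apply Multiset.map_congr rfl
    intro pr _
    rw [topv, Finsupp.add_apply, Finsupp.single_apply, Finsupp.single_apply]
    by_cases h : pr.1 = i <;> simp [h]

lemma mlead_inr {n : ℕ} (P : Multiset (Fin n)) (U : Multiset (Fin n × Fin n)) (k : Fin n) :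
    mlead P U (Sum.inr k) = (U.map Prod.snd).count k := by
  rw [mlead, Finsupp.add_apply, multiset_sum_apply, multiset_sum_apply]
  rw [show (P.map (fun a => (Finsupp.single (Sum.inl a) 1 : (Fin n ⊕ Fin n) →₀ ℕ) (Sum.inr k)))
      = P.map (fun _ => 0) from Multiset.map_congr rfl fun a _ => by
        rw [Finsupp.single_apply, if_neg (by simp)]]
  rw [← count_eq_sum', Multiset.map_map]
  simp only [Multiset.map_const', Multiset.sum_replicate, smul_zero, zero_add]
  apply congrArg; apply Multiset.map_congr rfl
  intro pr _
  rw [topv, Finsupp.add_apply, Finsupp.single_apply, Finsupp.single_apply,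
    if_neg (by simp)]
  by_cases h : pr.2 = k <;> simp [h]

lemma mlead_cons {n : ℕ} (P : Multiset (Fin n)) (pr : Fin n × Fin n)
    (U : Multiset (Fin n × Fin n)) :
    mlead P (pr ::ₘ U) = topv pr + mlead P U := by
  rw [mlead, mlead, Multiset.map_cons, Multiset.sum_cons, add_left_comm]

lemma key {n : ℕ} (L : (Fin n ⊕ Fin n) →₀ ℕ) (P : Multiset (Fin n))
    (U : Multiset (Fin n × Fin n))
    (hU : ∀ pr ∈ U, pr.1 < pr.2)
    (hx : ∀ pr ∈ U, ∀ qr ∈ U, ¬(pr.1 < qr.1 ∧ qr.1 < pr.2 ∧ pr.2 < qr.2))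
    (hc : ∀ pr ∈ U, ∀ i ∈ P, ¬(pr.1 < i ∧ i < pr.2))
    (hL : mlead P U = L) (k₀ i₀ : Fin n)
    (hk1 : L (Sum.inr k₀) ≠ 0)
    (hk2 : ∀ k, L (Sum.inr k) ≠ 0 → k₀ ≤ k)
    (hi0 : L (Sum.inl i₀) ≠ 0)
    (hi1 : i₀ < k₀)
    (hi2 : ∀ i, i < k₀ → L (Sum.inl i) ≠ 0 → i ≤ i₀) :
    (i₀, k₀) ∈ U := by
  subst hL
  -- some pair ends at k₀
  have hk1' : k₀ ∈ U.map Prod.snd := by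
    rw [← Multiset.count_pos, Nat.pos_iff_ne_zero]
    rw [mlead_inr] at hk1; exact hk1
  obtain ⟨pr₀, hpr₀U, hpr₀2⟩ := Multiset.mem_map.mp hk1'
  classical
  have hGne : (Finset.univ.filter (fun j => (j, k₀) ∈ U)).Nonempty :=
    ⟨pr₀.1, Finset.mem_filter.mpr ⟨Finset.mem_univ _, by rw [← hpr₀2]; exact hpr₀U⟩⟩
  set js : Fin n := (Finset.univ.filter (fun j => (j, k₀) ∈ U)).max' hGne with hjs
  have hjsU : (js, k₀) ∈ U :=
    (Finset.mem_filter.mp (Finset.max'_mem _ hGne)).2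
  have hjsmax : ∀ qr ∈ U, qr.2 = k₀ → qr.1 ≤ js := by
    intro qr hqr hqr2
    apply Finset.le_max'
    exact Finset.mem_filter.mpr ⟨Finset.mem_univ _, by rw [← hqr2]; exact hqr⟩
  have hjslt : js < k₀ := hU (js, k₀) hjsU
  have hjsle : js ≤ i₀ := by
    apply hi2 js hjslt
    rw [mlead_inl]
    have : js ∈ U.map Prod.fst := Multiset.mem_map_of_mem _ hjsU
    rw [← Multiset.count_pos] at this
    omega
  rcases eq_or_lt_of_le hjsle with heq | hlt
  · rw [← heq]; exact hjsU
  · exfalso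
    rw [mlead_inl] at hi0
    have hk0le : ∀ qr ∈ U, k₀ ≤ qr.2 := by
      intro qr hqr
      apply hk2
      rw [mlead_inr]
      have : qr.2 ∈ U.map Prod.snd := Multiset.mem_map_of_mem _ hqr
      rw [← Multiset.count_pos] at this
      omega
    by_cases hP : i₀ ∈ P
    · exact hc (js, k₀) hjsU i₀ hP ⟨hlt, hi1⟩
    · have hcnt : (U.map Prod.fst).count i₀ ≠ 0 := by
        have : P.count i₀ = 0 := Multiset.count_eq_zero.mpr hP
        omega
      have : i₀ ∈ U.map Prod.fst := by rw [← Multiset.count_pos]; omega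
      obtain ⟨qr, hqrU, hqr1⟩ := Multiset.mem_map.mp this
      rcases eq_or_lt_of_le (hk0le qr hqrU) with heq2 | hlt2
      · exact absurd (hjsmax qr hqrU heq2.symm) (by rw [hqr1]; exact not_le.mpr hlt)
      · exact hx (js, k₀) hjsU qr hqrU ⟨by rw [hqr1]; exact hlt, by rw [hqr1]; exact hi1, hlt2⟩

lemma recon {n : ℕ} : ∀ (N : ℕ) (U U' : Multiset (Fin n × Fin n)) (P P' : Multiset (Fin n)),
    U.card = N →
    (∀ pr ∈ U, pr.1 < pr.2) →
    (∀ pr ∈ U, ∀ qr ∈ U, ¬(pr.1 < qr.1 ∧ qr.1 < pr.2 ∧ pr.2 < qr.2)) →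
    (∀ pr ∈ U, ∀ i ∈ P, ¬(pr.1 < i ∧ i < pr.2)) →
    (∀ pr ∈ U', pr.1 < pr.2) →
    (∀ pr ∈ U', ∀ qr ∈ U', ¬(pr.1 < qr.1 ∧ qr.1 < pr.2 ∧ pr.2 < qr.2)) →
    (∀ pr ∈ U', ∀ i ∈ P', ¬(pr.1 < i ∧ i < pr.2)) →
    mlead P U = mlead P' U' → U = U' ∧ P = P' := by
  intro N
  induction N using Nat.strong_induction_on with
  | _ N ih =>
    intro U U' P P' hcard hU hx hc hU' hx' hc' hL
    classical
    by_cases hU0 : U = 0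
    · subst hU0
      have hU'0 : U' = 0 := by
        by_contra h
        obtain ⟨pr, hpr⟩ := Multiset.exists_mem_of_ne_zero h
        have h1 : (mlead P 0) (Sum.inr pr.2) = 0 := by rw [mlead_inr]; simp
        rw [hL, mlead_inr] at h1
        have : pr.2 ∈ U'.map Prod.snd := Multiset.mem_map_of_mem _ hpr
        rw [← Multiset.count_pos] at this
        omega
      subst hU'0
      refine ⟨rfl, Multiset.ext.mpr fun i => ?_⟩
      have := congrFun (congrArg DFunLike.coe hL) (Sum.inl i)
      rw [mlead_inl, mlead_inl] at this
      simpa using this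
    · -- U ≠ 0 : find the distinguished pair (i₀, k₀)
      set L := mlead P U with hLdef
      obtain ⟨pr₁, hpr₁⟩ := Multiset.exists_mem_of_ne_zero hU0
      have hmemL : ∀ pr ∈ U, L (Sum.inr pr.2) ≠ 0 := by
        intro pr hpr
        rw [hLdef, mlead_inr]
        have : pr.2 ∈ U.map Prod.snd := Multiset.mem_map_of_mem _ hpr
        rw [← Multiset.count_pos] at this
        omega
      have hKne : (Finset.univ.filter (fun k => L (Sum.inr k) ≠ 0)).Nonempty :=
        ⟨pr₁.2, Finset.mem_filter.mpr ⟨Finset.mem_univ _, hmemL pr₁ hpr₁⟩⟩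
      set k₀ : Fin n := (Finset.univ.filter (fun k => L (Sum.inr k) ≠ 0)).min' hKne with hk₀
      have hk1 : L (Sum.inr k₀) ≠ 0 := (Finset.mem_filter.mp (Finset.min'_mem _ hKne)).2
      have hk2 : ∀ k, L (Sum.inr k) ≠ 0 → k₀ ≤ k := by
        intro k hk
        exact Finset.min'_le _ k (Finset.mem_filter.mpr ⟨Finset.mem_univ _, hk⟩)
      -- a pair ending at k₀, to seed the i₀ set
      have hk1' : k₀ ∈ U.map Prod.snd := by
        rw [← Multiset.count_pos, Nat.pos_iff_ne_zero]
        rw [hLdef, mlead_inr] at hk1; exact hk1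
      obtain ⟨pr₂, hpr₂U, hpr₂2⟩ := Multiset.mem_map.mp hk1'
      have hIne : (Finset.univ.filter (fun i => L (Sum.inl i) ≠ 0 ∧ i < k₀)).Nonempty := by
        refine ⟨pr₂.1, Finset.mem_filter.mpr ⟨Finset.mem_univ _, ?_, hpr₂2 ▸ hU pr₂ hpr₂U⟩⟩
        rw [hLdef, mlead_inl]
        have : pr₂.1 ∈ U.map Prod.fst := Multiset.mem_map_of_mem _ hpr₂U
        rw [← Multiset.count_pos] at this
        omega
      set i₀ : Fin n := (Finset.univ.filter (fun i => L (Sum.inl i) ≠ 0 ∧ i < k₀)).max' hIne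
        with hi₀
      have hi0 : L (Sum.inl i₀) ≠ 0 := (Finset.mem_filter.mp (Finset.max'_mem _ hIne)).2.1
      have hi1 : i₀ < k₀ := (Finset.mem_filter.mp (Finset.max'_mem _ hIne)).2.2
      have hi2 : ∀ i, i < k₀ → L (Sum.inl i) ≠ 0 → i ≤ i₀ := by
        intro i hlt1 hne1
        exact Finset.le_max' _ i (Finset.mem_filter.mpr ⟨Finset.mem_univ _, hne1, hlt1⟩)
      have h1 : (i₀, k₀) ∈ U := key L P U hU hx hc rfl k₀ i₀ hk1 hk2 hi0 hi1 hi2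
      have h2 : (i₀, k₀) ∈ U' := key L P' U' hU' hx' hc' hL.symm k₀ i₀ hk1 hk2 hi0 hi1 hi2
      -- cancel the pair and use the induction hypothesis
      have hLrest : mlead P (U.erase (i₀, k₀)) = mlead P' (U'.erase (i₀, k₀)) := by
        apply add_left_cancel (a := topv ((i₀, k₀) : Fin n × Fin n))
        rw [← mlead_cons, ← mlead_cons, Multiset.cons_erase h1, Multiset.cons_erase h2]
        exact hL
      have hNpos : 0 < N := by
        rw [← hcard, Multiset.card_pos]; exact hU0
      have hrec := ih (N - 1) (by omega) (U.erase (i₀, k₀)) (U'.erase (i₀, k₀)) P P'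
        (by rw [Multiset.card_erase_of_mem h1, hcard]; rfl)
        (fun pr hpr => hU pr (Multiset.mem_of_mem_erase hpr))
        (fun pr hpr qr hqr => hx pr (Multiset.mem_of_mem_erase hpr) qr
          (Multiset.mem_of_mem_erase hqr))
        (fun pr hpr => hc pr (Multiset.mem_of_mem_erase hpr))
        (fun pr hpr => hU' pr (Multiset.mem_of_mem_erase hpr))
        (fun pr hpr qr hqr => hx' pr (Multiset.mem_of_mem_erase hpr) qr
          (Multiset.mem_of_mem_erase hqr))
        (fun pr hpr => hc' pr (Multiset.mem_of_mem_erase hpr))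
        hLrest
      refine ⟨?_, hrec.2⟩
      rw [← Multiset.cons_erase h1, ← Multiset.cons_erase h2, hrec.1]


lemma leadOf_eq_mlead {n c d : ℕ} (idx : Fin c → Fin n) (jk : Fin d → Fin n × Fin n) :
    leadOf idx jk = mlead (Finset.univ.val.map idx) (Finset.univ.val.map jk) := by
  rw [mlead, Multiset.map_map, Multiset.map_map]
  rfl

lemma prodOf_eq_multiset (K : Type*) [CommRing K] {n c d : ℕ}
    (idx : Fin c → Fin n) (jk : Fin d → Fin n × Fin n) :
    prodOf K idx jk
      = ((Finset.univ.val.map idx).map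
          (fun i => (X (Sum.inl i) : MvPolynomial (Fin n ⊕ Fin n) K))).prod *
        ((Finset.univ.val.map jk).map
          (fun pr => X (Sum.inl pr.1) * X (Sum.inr pr.2)
            - X (Sum.inl pr.2) * X (Sum.inr pr.1))).prod := by
  rw [Multiset.map_map, Multiset.map_map]
  rfl

lemma mem_lt_of_fn {n d : ℕ} (jk : Fin d → Fin n × Fin n)
    (hlt : ∀ p, (jk p).1 < (jk p).2) :
    ∀ pr ∈ Finset.univ.val.map jk, pr.1 < pr.2 := by
  intro pr hpr
  obtain ⟨p, -, rfl⟩ := Multiset.mem_map.mp hpr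
  exact hlt p

lemma mem_nocross_of_fn {n d : ℕ} (jk : Fin d → Fin n × Fin n)
    (hint : ∀ p q, ¬((jk p).1 < (jk q).1 ∧ (jk q).1 < (jk p).2 ∧ (jk p).2 < (jk q).2)) :
    ∀ pr ∈ Finset.univ.val.map jk, ∀ qr ∈ Finset.univ.val.map jk,
      ¬(pr.1 < qr.1 ∧ qr.1 < pr.2 ∧ pr.2 < qr.2) := by
  intro pr hpr qr hqr
  obtain ⟨p, -, rfl⟩ := Multiset.mem_map.mp hpr
  obtain ⟨q, -, rfl⟩ := Multiset.mem_map.mp hqr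
  exact hint p q

lemma mem_nocover_of_fn {n c d : ℕ} (idx : Fin c → Fin n) (jk : Fin d → Fin n × Fin n)
    (hcov : ∀ p t, ¬((jk p).1 < idx t ∧ idx t < (jk p).2)) :
    ∀ pr ∈ Finset.univ.val.map jk, ∀ i ∈ Finset.univ.val.map idx,
      ¬(pr.1 < i ∧ i < pr.2) := by
  intro pr hpr i hi
  obtain ⟨p, -, rfl⟩ := Multiset.mem_map.mp hpr
  obtain ⟨t, -, rfl⟩ := Multiset.mem_map.mp hi
  exact hcov p t

/-- For a normal product `w = x_{i_1} ⋯ x_{i_c} u_{j_1 k_1} ⋯ u_{j_d k_d}` (no two `u`-factors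
intersect each other and no `u`-factor covers an `x_{i_t}`), the leading monomial of `w` with
respect to the lexicographic order on exponent vectors `(a_1, b_1, …, a_n, b_n)` is
`x_{i_1} ⋯ x_{i_c} · x_{j_1} y_{k_1} ⋯ x_{j_d} y_{k_d}`; moreover distinct normal products
have distinct leading monomials. -/
theorem leading_monomial_of_normal_product {K : Type*} [Field K] [CharZero K] (n : ℕ)
    {c d : ℕ} (idx : Fin c → Fin n) (jk : Fin d → Fin n × Fin n)
    (hlt : ∀ p, (jk p).1 < (jk p).2)
    (hint : ∀ p q, ¬((jk p).1 < (jk q).1 ∧ (jk q).1 < (jk p).2 ∧ (jk p).2 < (jk q).2))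
    (hcov : ∀ p t, ¬((jk p).1 < idx t ∧ idx t < (jk p).2))
    {c' d' : ℕ} (idx' : Fin c' → Fin n) (jk' : Fin d' → Fin n × Fin n)
    (hlt' : ∀ p, (jk' p).1 < (jk' p).2)
    (hint' : ∀ p q, ¬((jk' p).1 < (jk' q).1 ∧ (jk' q).1 < (jk' p).2 ∧ (jk' p).2 < (jk' q).2))
    (hcov' : ∀ p t, ¬((jk' p).1 < idx' t ∧ idx' t < (jk' p).2)) :
    leadOf idx jk ∈ (prodOf K idx jk).support ∧
    (∀ e ∈ (prodOf K idx jk).support, e ≠ leadOf idx jk → lexGT (leadOf idx jk) e) ∧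
    (prodOf K idx jk ≠ prodOf K idx' jk' → leadOf idx jk ≠ leadOf idx' jk') := by
  classical
  refine ⟨?_, support_lexGT K idx jk hlt, ?_⟩
  · rw [MvPolynomial.mem_support_iff, coeff_leadOf K idx jk hlt]
    exact one_ne_zero
  · intro hne hleq
    apply hne
    have hrec := recon (N := d) (Finset.univ.val.map jk) (Finset.univ.val.map jk')
      (Finset.univ.val.map idx) (Finset.univ.val.map idx')
      (by simp)
      (mem_lt_of_fn jk hlt) (mem_nocross_of_fn jk hint) (mem_nocover_of_fn idx jk hcov)
      (mem_lt_of_fn jk' hlt') (mem_nocross_of_fn jk' hint') (mem_nocover_of_fn idx' jk' hcov')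
      (by rw [← leadOf_eq_mlead, ← leadOf_eq_mlead, hleq])
    rw [prodOf_eq_multiset, prodOf_eq_multiset, hrec.1, hrec.2]
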